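/- Positivity of the hybrid upwind finite-volume scheme under CFL conditions: let n ≥ 1 with periodic cell indices j ∈ ℤ/nℤ, let Δt, Δx, β > 0 and set λ₁ = Δt/Δx and λ₂ = √(Δt/Δx). Suppose given strictly positive reconstructed east/west cell values ρᴱⱼ > 0, ρᵂⱼ > 0, interface velocities uⱼ ∈ ℝ and interface noise samples ξⱼ ∈ ℝ (uⱼ and ξⱼ being the values at interface j+1/2). Define the forward-Euler updated cell averages ρ'ⱼ = (ρᴱⱼ + ρᵂⱼ)/2 − λ₁(u⁺ⱼ ρᴱⱼ + u⁻ⱼ ρᵂⱼ₊₁ − u⁺ⱼ₋₁ ρᴱⱼ₋₁ − u⁻ⱼ₋₁ ρᵂⱼ) − λ₂(ξ⁺ⱼ √(ρᴱⱼ/β) + ξ⁻ⱼ √(ρᵂⱼ₊₁/β) − ξ⁺ⱼ₋₁ √(ρᴱⱼ₋₁/β) − ξ⁻ⱼ₋₁ √(ρᵂⱼ/β)). If for every j the two CFL conditions 1/2 − λ₁ u⁺ⱼ − λ₂ ξ⁺ⱼ / √(ρᴱⱼ β) ≥ 0 and 1/2 − λ₁ max(−uⱼ₋₁, 0) − λ₂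 max(−ξⱼ₋₁, 0) / √(ρᵂⱼ β) ≥ 0 hold, then ρ'ⱼ ≥ 0 for all j. -/

import Mathlib

private lemma sqrt_div_key {x β : ℝ} (hx : 0 < x) (hβ : 0 < β) :
    Real.sqrt (x / β) = x / Real.sqrt (x * β) := by
  have h : (0:ℝ) < x * β := mul_pos hx hβ
  have hs : 0 < Real.sqrt (x * β) := Real.sqrt_pos.2 h
  rw [eq_div_iff hs.ne', ← Real.sqrt_mul (by positivity) (x * β),
    show x / β * (x * β) = x ^ 2 by field_simp, Real.sqrt_sq hx.le]

/-- Positivity of the hybrid upwind finite-volume scheme under CFL conditions.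
Indices are periodic, `j ∈ ZMod n`; `u j` and `ξ j` are the interface values at `j+1/2`;
positive and negative parts are written `max · 0` and `min · 0`. -/
theorem positivity_upwind_scheme_CFL
    (n : ℕ) (hn : 1 ≤ n)
    (Δt Δx β : ℝ) (hΔt : 0 < Δt) (hΔx : 0 < Δx) (hβ : 0 < β)
    (lam1 lam2 : ℝ) (hlam1 : lam1 = Δt / Δx) (hlam2 : lam2 = Real.sqrt (Δt / Δx))
    (ρE ρW u ξ : ZMod n → ℝ)
    (hρE : ∀ j, 0 < ρE j) (hρW : ∀ j, 0 < ρW j)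
    (ρ' : ZMod n → ℝ)
    (hρ' : ∀ j, ρ' j =
      (ρE j + ρW j) / 2
      - lam1 * (max (u j) 0 * ρE j + min (u j) 0 * ρW (j + 1)
              - max (u (j - 1)) 0 * ρE (j - 1) - min (u (j - 1)) 0 * ρW j)
      - lam2 * (max (ξ j) 0 * Real.sqrt (ρE j / β)
              + min (ξ j) 0 * Real.sqrt (ρW (j + 1) / β)
              - max (ξ (j - 1)) 0 * Real.sqrt (ρE (j - 1) / β)
              - min (ξ (j - 1)) 0 * Real.sqrt (ρW j / β)))
    (hCFL1 : ∀ j, 0 ≤ 1 / 2 - lam1 * max (u j) 0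
        - lam2 * max (ξ j) 0 / Real.sqrt (ρE j * β))
    (hCFL2 : ∀ j, 0 ≤ 1 / 2 - lam1 * max (-u (j - 1)) 0
        - lam2 * max (-ξ (j - 1)) 0 / Real.sqrt (ρW j * β)) :
    ∀ j, 0 ≤ ρ' j := by
  have hl1 : 0 ≤ lam1 := by rw [hlam1]; positivity
  have hl2 : 0 ≤ lam2 := by rw [hlam2]; positivity
  intro j
  have hA := mul_nonneg (hρE j).le (hCFL1 j)
  have hB := mul_nonneg (hρW j).le (hCFL2 j)
  have t1 : 0 ≤ lam1 * (max (u (j-1)) 0 * ρE (j-1)) :=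
    mul_nonneg hl1 (mul_nonneg (le_max_right _ _) (hρE _).le)
  have t2 : lam1 * (min (u j) 0 * ρW (j+1)) ≤ 0 :=
    mul_nonpos_of_nonneg_of_nonpos hl1
      (mul_nonpos_of_nonpos_of_nonneg (min_le_right _ _) (hρW _).le)
  have t3 : 0 ≤ lam2 * (max (ξ (j-1)) 0 * Real.sqrt (ρE (j-1) / β)) :=
    mul_nonneg hl2 (mul_nonneg (le_max_right _ _) (Real.sqrt_nonneg _))
  have t4 : lam2 * (min (ξ j) 0 * Real.sqrt (ρW (j+1) / β)) ≤ 0 :=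
    mul_nonpos_of_nonneg_of_nonpos hl2
      (mul_nonpos_of_nonpos_of_nonneg (min_le_right _ _) (Real.sqrt_nonneg _))
  have e1 : Real.sqrt (ρE j / β) = ρE j / Real.sqrt (ρE j * β) :=
    sqrt_div_key (hρE j) hβ
  have e2 : Real.sqrt (ρW j / β) = ρW j / Real.sqrt (ρW j * β) :=
    sqrt_div_key (hρW j) hβ
  have m1 : min (u (j-1)) 0 = -max (-u (j-1)) 0 := by
    simpa using (min_neg_neg (-u (j-1)) 0)
  have m2 : min (ξ (j-1)) 0 = -max (-ξ (j-1)) 0 := by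
    simpa using (min_neg_neg (-ξ (j-1)) 0)
  have hEq : ρ' j =
      ρE j * (1 / 2 - lam1 * max (u j) 0
        - lam2 * max (ξ j) 0 / Real.sqrt (ρE j * β))
    + ρW j * (1 / 2 - lam1 * max (-u (j - 1)) 0
        - lam2 * max (-ξ (j - 1)) 0 / Real.sqrt (ρW j * β))
    + lam1 * (max (u (j-1)) 0 * ρE (j-1))
    - lam1 * (min (u j) 0 * ρW (j+1))
    + lam2 * (max (ξ (j-1)) 0 * Real.sqrt (ρE (j-1) / β))
    - lam2 * (min (ξ j) 0 * Real.sqrt (ρW (j+1) / β)) := by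
    rw [hρ' j, e1, e2, m1, m2]; ring
  linarith
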